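/- Let P and P₀ be real symmetric positive definite n×n matrices, let S be a real symmetric n×n matrix, and let h ∈ ℝ. Define log(P P₀^{−1}) := P₀^{1/2} log(P₀^{−1/2} P P₀^{−1/2}) P₀^{−1/2}. If the first-order stationarity condition ½ P^{−1} log(P P₀^{−1}) + (h/2) S = 0 holds, then P P₀^{−1} = exp(−h P S), where exp denotes the matrix exponential. -/

import Mathlib

open Matrix

/-- Apply a scalar function to a real symmetric matrix via its spectral decomposition
(functional calculus); defined to be `0` on non-symmetric matrices. -/
noncomputable def matFun {n : ℕ} (f : ℝ → ℝ) (A : Matrix (Fin n) (Fin n) ℝ) :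
    Matrix (Fin n) (Fin n) ℝ :=
  if hA : A.IsHermitian then
    (hA.eigenvectorUnitary : Matrix (Fin n) (Fin n) ℝ) * Matrix.diagonal (f ∘ hA.eigenvalues)
      * (star (hA.eigenvectorUnitary : Matrix (Fin n) (Fin n) ℝ))
  else 0

/-- The principal matrix logarithm of a real symmetric (positive definite) matrix. -/
noncomputable def matLog {n : ℕ} (A : Matrix (Fin n) (Fin n) ℝ) : Matrix (Fin n) (Fin n) ℝ :=
  matFun Real.log A

/-- The real power `A^t` of a real symmetric positive definite matrix. -/
noncomputable def matPow {n : ℕ} (A : Matrix (Fin n) (Fin n) ℝ) (t : ℝ) :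
    Matrix (Fin n) (Fin n) ℝ :=
  matFun (fun x => x ^ t) A

section Aux

variable {n : ℕ}

lemma matFun_eq {f : ℝ → ℝ} {A : Matrix (Fin n) (Fin n) ℝ} (hA : A.IsHermitian) :
    matFun f A = (hA.eigenvectorUnitary : Matrix (Fin n) (Fin n) ℝ) *
      Matrix.diagonal (f ∘ hA.eigenvalues) *
      (star (hA.eigenvectorUnitary : Matrix (Fin n) (Fin n) ℝ)) := dif_pos hA

lemma star_mul_self_eigU {A : Matrix (Fin n) (Fin n) ℝ} (hA : A.IsHermitian) :
    (star (hA.eigenvectorUnitary : Matrix (Fin n) (Fin n) ℝ)) *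
      (hA.eigenvectorUnitary : Matrix (Fin n) (Fin n) ℝ) = 1 :=
  Matrix.mem_unitaryGroup_iff'.mp hA.eigenvectorUnitary.2

lemma mul_star_self_eigU {A : Matrix (Fin n) (Fin n) ℝ} (hA : A.IsHermitian) :
    (hA.eigenvectorUnitary : Matrix (Fin n) (Fin n) ℝ) *
      (star (hA.eigenvectorUnitary : Matrix (Fin n) (Fin n) ℝ)) = 1 :=
  Matrix.mem_unitaryGroup_iff.mp hA.eigenvectorUnitary.2

lemma matFun_mul_matFun (f g : ℝ → ℝ) {A : Matrix (Fin n) (Fin n) ℝ} (hA : A.IsHermitian) :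
    matFun f A * matFun g A = matFun (fun x => f x * g x) A := by
  rw [matFun_eq hA, matFun_eq hA, matFun_eq hA]
  simp only [mul_assoc]
  rw [← mul_assoc (star (hA.eigenvectorUnitary : Matrix (Fin n) (Fin n) ℝ)),
    star_mul_self_eigU hA, one_mul, ← mul_assoc (Matrix.diagonal (f ∘ hA.eigenvalues)),
    Matrix.diagonal_mul_diagonal]
  rfl

lemma matFun_congr {f g : ℝ → ℝ} {A : Matrix (Fin n) (Fin n) ℝ} (hA : A.IsHermitian)
    (hfg : ∀ i, f (hA.eigenvalues i) = g (hA.eigenvalues i)) :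
    matFun f A = matFun g A := by
  rw [matFun_eq hA, matFun_eq hA]
  have : f ∘ hA.eigenvalues = g ∘ hA.eigenvalues := funext hfg
  rw [this]

lemma matFun_one {f : ℝ → ℝ} {A : Matrix (Fin n) (Fin n) ℝ} (hA : A.IsHermitian)
    (hf : ∀ i, f (hA.eigenvalues i) = 1) :
    matFun f A = 1 := by
  rw [matFun_eq hA]
  have : Matrix.diagonal (f ∘ hA.eigenvalues) = 1 := by
    rw [show f ∘ hA.eigenvalues = fun _ => 1 from funext fun i => hf i, Matrix.diagonal_one]
  rw [this, mul_one, mul_star_self_eigU hA]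

lemma matFun_id {A : Matrix (Fin n) (Fin n) ℝ} (hA : A.IsHermitian) :
    matFun (fun x => x) A = A := by
  rw [matFun_eq hA]
  conv_rhs => rw [hA.spectral_theorem]
  norm_num [Function.comp_def]

lemma matFun_isHermitian {f : ℝ → ℝ} {A : Matrix (Fin n) (Fin n) ℝ} (hA : A.IsHermitian) :
    (matFun f A).IsHermitian := by
  rw [matFun_eq hA]
  unfold Matrix.IsHermitian
  simp [Matrix.conjTranspose_mul, Matrix.diagonal_conjTranspose, mul_assoc,
    Matrix.star_eq_conjTranspose, Matrix.conjTranspose_eq_transpose_of_trivial]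

lemma exp_matFun {f : ℝ → ℝ} {A : Matrix (Fin n) (Fin n) ℝ} (hA : A.IsHermitian) :
    NormedSpace.exp (matFun f A) = matFun (fun x => Real.exp (f x)) A := by
  have hU : IsUnit ((hA.eigenvectorUnitary : Matrix (Fin n) (Fin n) ℝ)) := by
    apply Matrix.isUnit_iff_isUnit_det _ |>.2
    have h1 := congrArg Matrix.det (mul_star_self_eigU hA)
    rw [Matrix.det_mul, Matrix.det_one] at h1
    exact IsUnit.of_mul_eq_one _ h1
  have hinv : ((hA.eigenvectorUnitary : Matrix (Fin n) (Fin n) ℝ))⁻¹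
      = star ((hA.eigenvectorUnitary : Matrix (Fin n) (Fin n) ℝ)) :=
    Matrix.inv_eq_left_inv (star_mul_self_eigU hA)
  rw [matFun_eq hA, matFun_eq hA, ← hinv, Matrix.exp_conj _ _ hU, Matrix.exp_diagonal]
  congr 2
  funext i
  simp only [Pi.exp_def, ← Real.exp_eq_exp_ℝ]
  rfl

lemma posDef_conj {P B : Matrix (Fin n) (Fin n) ℝ} (hP : P.PosDef) (hB : B.IsHermitian)
    (hBu : IsUnit B) : (B * P * B).PosDef := by
  refine Matrix.PosDef.of_dotProduct_mulVec_pos ?_ fun x hx => ?_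
  · have : (B * P * B)ᴴ = B * P * B := by
      rw [Matrix.conjTranspose_mul, Matrix.conjTranspose_mul, hB.eq, hP.isHermitian.eq, mul_assoc]
    exact this
  · have hx' : B *ᵥ x ≠ 0 := fun hc =>
      hx ((Matrix.mulVec_injective_iff_isUnit.mpr hBu)
        (hc.trans (Matrix.mulVec_zero B).symm))
    have key := hP.dotProduct_mulVec_pos hx'
    have heq : dotProduct (star x) ((B * P * B) *ᵥ x)
        = dotProduct (star (B *ᵥ x)) (P *ᵥ (B *ᵥ x)) := by
      simp only [Matrix.star_mulVec, hB.eq, Matrix.dotProduct_mulVec,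
        Matrix.vecMul_vecMul, Matrix.mul_assoc]
    rw [heq]
    exact key

end Aux

/-- If the first-order stationarity condition
`½ P⁻¹ log(P P₀⁻¹) + (h/2) S = 0` holds, where
`log(P P₀⁻¹) := P₀^{1/2} log(P₀^{-1/2} P P₀^{-1/2}) P₀^{-1/2}`, then
`P P₀⁻¹ = exp(-h P S)`. -/
theorem stationarity_implies_exp {n : ℕ} (P P₀ : Matrix (Fin n) (Fin n) ℝ)
    (hP : P.PosDef) (hP₀ : P₀.PosDef)
    (S : Matrix (Fin n) (Fin n) ℝ) (hS : S.IsHermitian) (h : ℝ)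
    (hstat : (1/2 : ℝ) •
        (P⁻¹ * (matPow P₀ ((1 : ℝ)/2) *
          matLog (matPow P₀ (-(1 : ℝ)/2) * P * matPow P₀ (-(1 : ℝ)/2)) *
            matPow P₀ (-(1 : ℝ)/2))) + (h/2) • S = 0) :
    P * P₀⁻¹ = NormedSpace.exp (-(h • (P * S))) := by
  have hH₀ := hP₀.isHermitian
  have hpos : ∀ i, 0 < hH₀.eigenvalues i := hP₀.eigenvalues_pos
  set Q := matPow P₀ ((1 : ℝ)/2) with hQdef
  set R := matPow P₀ (-(1 : ℝ)/2) with hRdef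
  set M := R * P * R with hMdef
  have hQR : Q * R = 1 := by
    rw [hQdef, hRdef]
    unfold matPow
    rw [matFun_mul_matFun _ _ hH₀]
    refine matFun_one hH₀ fun i => ?_
    rw [← Real.rpow_add (hpos i)]
    norm_num
  have hRQ : R * Q = 1 := by
    rw [hQdef, hRdef]
    unfold matPow
    rw [matFun_mul_matFun _ _ hH₀]
    refine matFun_one hH₀ fun i => ?_
    rw [← Real.rpow_add (hpos i)]
    norm_num
  have hRR : R * R = P₀⁻¹ := by
    rw [hRdef]
    unfold matPow
    rw [matFun_mul_matFun _ _ hH₀]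
    have h1 : matFun (fun x => x ^ (-(1 : ℝ)/2) * x ^ (-(1 : ℝ)/2)) P₀
        = matFun (fun x => x⁻¹) P₀ := by
      refine matFun_congr hH₀ fun i => ?_
      rw [← Real.rpow_add (hpos i)]
      rw [show (-(1 : ℝ)/2 + -(1 : ℝ)/2) = (-1 : ℝ) by norm_num, Real.rpow_neg_one]
    rw [h1]
    have h2 : matFun (fun x => x⁻¹) P₀ * P₀ = 1 := by
      calc matFun (fun x => x⁻¹) P₀ * P₀
          = matFun (fun x => x⁻¹) P₀ * matFun (fun x => x) P₀ := by rw [matFun_id hH₀]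
        _ = matFun (fun x => x⁻¹ * x) P₀ := matFun_mul_matFun _ _ hH₀
        _ = 1 := matFun_one hH₀ fun i => inv_mul_cancel₀ (hpos i).ne'
    exact (Matrix.inv_eq_left_inv h2).symm
  have hQu : IsUnit Q := ⟨⟨Q, R, hQR, hRQ⟩, rfl⟩
  have hRu : IsUnit R := ⟨⟨R, Q, hRQ, hQR⟩, rfl⟩
  have hRherm : R.IsHermitian := by
    rw [hRdef]; unfold matPow; exact matFun_isHermitian hH₀
  have hM : M.PosDef := posDef_conj hP hRherm hRu
  have hexpL : NormedSpace.exp (matLog M) = M := by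
    unfold matLog
    rw [exp_matFun hM.isHermitian]
    rw [matFun_congr (f := fun x => Real.exp (Real.log x)) (g := fun x => x) hM.isHermitian
      (fun i => Real.exp_log (hM.eigenvalues_pos i)), matFun_id hM.isHermitian]
  -- extract the equation from stationarity
  have hY : P⁻¹ * (Q * matLog M * R) = -(h • S) := by
    have h2 : (1/2 : ℝ) • (P⁻¹ * (Q * matLog M * R)) = -((h/2) • S) :=
      eq_neg_of_add_eq_zero_left hstat
    have h3 := congrArg (fun Z => (2 : ℝ) • Z) h2
    simp only [smul_smul, smul_neg] at h3
    norm_num at h3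
    rw [show (2 * (h/2) : ℝ) = h by ring] at h3
    exact h3
  have hX : Q * matLog M * R = -(h • (P * S)) := by
    have h4 := congrArg (fun Z => P * Z) hY
    rw [← Matrix.mul_assoc, Matrix.mul_nonsing_inv P
      ((Matrix.isUnit_iff_isUnit_det P).mp hP.isUnit), Matrix.one_mul] at h4
    rw [h4, Matrix.mul_neg, Matrix.mul_smul]
  rw [← hX]
  have hQinv : Q⁻¹ = R := Matrix.inv_eq_right_inv hQR
  rw [← hQinv, Matrix.exp_conj _ _ hQu, hexpL, hQinv]
  show P * P₀⁻¹ = Q * (R * P * R) * R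
  calc P * P₀⁻¹ = (Q * R) * P * (R * R) := by rw [hQR, hRR, Matrix.one_mul]
    _ = Q * (R * P * R) * R := by noncomm_ring
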